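/- There exists exactly one function p : [0,a) → ℝ that is bounded on [0,â] and satisfies the functional equation p(x) = p(τ21(x))·τ21′(x) + B(x) for all x ∈ [0,a). Moreover, for every x ∈ [0,a) the series Σ_{n=0}^∞ B(τ21^{∘n}(x)) · Π_{k=0}^{n−1} τ21′(τ21^{∘k}(x)) converges and its sum equals p(x), and the convergence is uniform on [0,s] for every s ∈ (0,a). -/

import Mathlib

open MeasureTheory Set Filter

/-- There exists exactly one function `p` on `[0,a)`, bounded on `[0,â]`,
satisfying `p(x) = p(τ21 x)·τ21'(x) + B(x)` on `[0,a)`; it is given by the series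
`Σₙ B(τ21ⁿ(x))·(τ21ⁿ)'(x)`, which converges on `[0,a)` and uniformly on every `[0,s]`,
`s ∈ (0,a)`, where `B = a·τ1' − τ21'`. -/
theorem functional_equation_extension_to_Ico
    (a ahat σ : ℝ) (ha : a ∈ Set.Ioo (0:ℝ) 1) (hahat : ahat ∈ Set.Ioo 0 a)
    (hσ : σ ∈ Set.Ioo (0:ℝ) 1)
    (τ21 τ21' τ1 τ1' : ℝ → ℝ)
    (hT21d : ∀ x ∈ Set.Icc 0 a, HasDerivAt τ21 (τ21' x) x)
    (hT21c : ContinuousOn τ21' (Set.Icc 0 a))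
    (hT21mono : StrictMonoOn τ21 (Set.Icc 0 a))
    (hT210 : τ21 0 = 0) (hT21a : τ21 a = a)
    (hT21lt : ∀ x ∈ Set.Ioo 0 a, τ21 x < x)
    (hT21bd : ∀ x ∈ Set.Icc 0 ahat, 0 ≤ τ21' x ∧ τ21' x ≤ σ)
    (hT1d : ∀ x ∈ Set.Icc 0 a, HasDerivAt τ1 (τ1' x) x)
    (hT1c : ContinuousOn τ1' (Set.Icc 0 a))
    (hT1mono : StrictMonoOn τ1 (Set.Icc 0 a))
    (hT10 : τ1 0 = 0) (hT1a : τ1 a = 1)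
    (B : ℝ → ℝ) (hB : B = fun x => a * τ1' x - τ21' x)
    (term : ℕ → ℝ → ℝ)
    (hterm : term = fun n x => B (τ21^[n] x) * ∏ k ∈ Finset.range n, τ21' (τ21^[k] x)) :
    ∃ p : ℝ → ℝ,
      ((∃ M, ∀ x ∈ Set.Icc 0 ahat, |p x| ≤ M) ∧
        (∀ x ∈ Set.Ico 0 a, p x = p (τ21 x) * τ21' x + B x)) ∧
      (∀ x ∈ Set.Ico 0 a, HasSum (fun n => term n x) (p x)) ∧
      (∀ s ∈ Set.Ioo 0 a,
        TendstoUniformlyOn (fun m x => ∑ n ∈ Finset.range m, term n x) p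
          Filter.atTop (Set.Icc 0 s)) ∧
      ∀ q : ℝ → ℝ,
        ((∃ M, ∀ x ∈ Set.Icc 0 ahat, |q x| ≤ M) ∧
          (∀ x ∈ Set.Ico 0 a, q x = q (τ21 x) * τ21' x + B x)) →
        Set.EqOn q p (Set.Ico 0 a) := by
  obtain ⟨ha0, ha1⟩ := ha
  obtain ⟨hah0, haha⟩ := hahat
  obtain ⟨hσ0, hσ1⟩ := hσ
  have hsub : Set.Icc (0:ℝ) ahat ⊆ Set.Icc 0 a := Set.Icc_subset_Icc le_rfl haha.le
  -- τ21 x ≤ x on [0,a]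
  have hle : ∀ x ∈ Set.Icc (0:ℝ) a, τ21 x ≤ x := by
    intro x hx
    rcases hx.1.eq_or_lt with h0 | h0
    · simp [← h0, hT210]
    · rcases hx.2.eq_or_lt with h1 | h1
      · simp [h1, hT21a]
      · exact (hT21lt x ⟨h0, h1⟩).le
  have hmem : ∀ x ∈ Set.Icc (0:ℝ) a, τ21 x ∈ Set.Icc (0:ℝ) a := by
    intro x hx
    refine ⟨?_, le_trans (hle x hx) hx.2⟩
    rw [← hT210]
    exact hT21mono.monotoneOn ⟨le_rfl, ha0.le⟩ hx hx.1
  have hiter_mem : ∀ x ∈ Set.Icc (0:ℝ) a, ∀ n, τ21^[n] x ∈ Set.Icc (0:ℝ) a := by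
    intro x hx n
    induction n with
    | zero => simpa using hx
    | succ n ih => rw [Function.iterate_succ_apply']; exact hmem _ ih
  have hiter_le : ∀ x ∈ Set.Icc (0:ℝ) a, ∀ n, τ21^[n] x ≤ x := by
    intro x hx n
    induction n with
    | zero => simp
    | succ n ih =>
      rw [Function.iterate_succ_apply']
      exact le_trans (hle _ (hiter_mem x hx n)) ih
  have hiter_mono : ∀ n, ∀ x ∈ Set.Icc (0:ℝ) a, ∀ y ∈ Set.Icc (0:ℝ) a, x ≤ y →
      τ21^[n] x ≤ τ21^[n] y := by
    intro n
    induction n with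
    | zero => intro x _ y _ h; simpa using h
    | succ n ih =>
      intro x hx y hy h
      rw [Function.iterate_succ_apply', Function.iterate_succ_apply']
      exact hT21mono.monotoneOn (hiter_mem x hx n) (hiter_mem y hy n) (ih x hx y hy h)
  -- [0,ahat] is invariant
  have hahat_mem : ∀ y ∈ Set.Icc (0:ℝ) ahat, ∀ k, τ21^[k] y ∈ Set.Icc (0:ℝ) ahat := by
    intro y hy k
    induction k with
    | zero => simpa using hy
    | succ k ih =>
      rw [Function.iterate_succ_apply']
      exact ⟨(hmem _ (hsub ih)).1, le_trans (hle _ (hsub ih)) ih.2⟩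
  -- bounds K and C
  obtain ⟨K0, hK0⟩ := isCompact_Icc.exists_bound_of_continuousOn hT21c
  set K : ℝ := max σ K0 with hKdef
  have hσK : σ ≤ K := le_max_left _ _
  have hK : ∀ x ∈ Set.Icc (0:ℝ) a, |τ21' x| ≤ K := fun x hx =>
    le_trans (hK0 x hx) (le_max_right _ _)
  have hKpos : (0:ℝ) ≤ K := le_trans hσ0.le hσK
  have hBc : ContinuousOn B (Set.Icc (0:ℝ) a) := by
    rw [hB]; exact (continuousOn_const.mul hT1c).sub hT21c
  obtain ⟨C, hC⟩ := isCompact_Icc.exists_bound_of_continuousOn hBc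
  have hC0 : (0:ℝ) ≤ C := le_trans (norm_nonneg _) (hC 0 ⟨le_rfl, ha0.le⟩)
  have hσa : ∀ y ∈ Set.Icc (0:ℝ) ahat, |τ21' y| ≤ σ := by
    intro y hy
    obtain ⟨h1, h2⟩ := hT21bd y hy
    rw [abs_le]; constructor <;> linarith
  -- generic product bound
  have habsprod : ∀ (c : ℝ), 0 ≤ c → ∀ (x : ℝ) (n : ℕ),
      (∀ k, k < n → |τ21' (τ21^[k] x)| ≤ c) →
      |∏ k ∈ Finset.range n, τ21' (τ21^[k] x)| ≤ c ^ n := by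
    intro c hc x n h
    rw [Finset.abs_prod]
    calc ∏ k ∈ Finset.range n, |τ21' (τ21^[k] x)| ≤ ∏ _k ∈ Finset.range n, c :=
          Finset.prod_le_prod (fun i _ => abs_nonneg _)
            (fun i hi => h i (Finset.mem_range.mp hi))
      _ = c ^ n := by simp
  -- iterates eventually reach [0, ahat]
  have htend : ∀ s ∈ Set.Ico (0:ℝ) a, ∃ N, τ21^[N] s ∈ Set.Icc (0:ℝ) ahat := by
    intro s hs
    have hs' : s ∈ Set.Icc (0:ℝ) a := ⟨hs.1, hs.2.le⟩
    set seq : ℕ → ℝ := fun n => τ21^[n] s with hseq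
    have hant : Antitone seq := by
      apply antitone_nat_of_succ_le
      intro n
      show τ21^[n+1] s ≤ τ21^[n] s
      rw [Function.iterate_succ_apply']
      exact hle _ (hiter_mem s hs' n)
    have hbdd : BddBelow (Set.range seq) := by
      refine ⟨0, ?_⟩
      rintro y ⟨n, rfl⟩
      exact (hiter_mem s hs' n).1
    have hTend : Filter.Tendsto seq Filter.atTop (nhds (⨅ n, seq n)) :=
      tendsto_atTop_ciInf hant hbdd
    set L : ℝ := ⨅ n, seq n with hL
    have hL0 : 0 ≤ L := le_ciInf fun n => (hiter_mem s hs' n).1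
    have hLs : L ≤ s := by
      have := ciInf_le hbdd 0
      simpa [hseq] using this
    have hLmem : L ∈ Set.Icc (0:ℝ) a := ⟨hL0, le_trans hLs hs'.2⟩
    have hfix : τ21 L = L := by
      have h1 : Filter.Tendsto (fun n => τ21 (seq n)) Filter.atTop (nhds (τ21 L)) :=
        ((hT21d L hLmem).continuousAt.tendsto).comp hTend
      have h2 : Filter.Tendsto (fun n => τ21 (seq n)) Filter.atTop (nhds L) := by
        have : (fun n => τ21 (seq n)) = fun n => seq (n + 1) := by
          funext n
          simp [hseq, Function.iterate_succ_apply']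
        rw [this]
        exact hTend.comp (Filter.tendsto_add_atTop_nat 1)
      exact tendsto_nhds_unique h1 h2
    have hL00 : L = 0 := by
      by_contra h
      have hLpos : 0 < L := lt_of_le_of_ne hL0 (Ne.symm h)
      have : τ21 L < L := hT21lt L ⟨hLpos, lt_of_le_of_lt hLs hs.2⟩
      linarith [hfix]
    rw [hL00] at hTend
    have := (hTend.eventually_lt_const hah0).exists
    obtain ⟨N, hN⟩ := this
    exact ⟨N, (hiter_mem s hs' N).1, hN.le⟩
  -- key product estimate on [0,s]
  have hprodkey : ∀ s ∈ Set.Ico (0:ℝ) a, ∃ N : ℕ, ∀ x ∈ Set.Icc 0 s,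
      (∀ m, τ21^[N + m] x ∈ Set.Icc (0:ℝ) ahat) ∧
      (∀ m, |∏ k ∈ Finset.range (N + m), τ21' (τ21^[k] x)| ≤ K ^ N * σ ^ m) := by
    intro s hs
    obtain ⟨N, hN⟩ := htend s hs
    have hs' : s ∈ Set.Icc (0:ℝ) a := ⟨hs.1, hs.2.le⟩
    refine ⟨N, fun x hx => ?_⟩
    have hx' : x ∈ Set.Icc (0:ℝ) a := ⟨hx.1, le_trans hx.2 hs'.2⟩
    have hxN : τ21^[N] x ∈ Set.Icc (0:ℝ) ahat :=
      ⟨(hiter_mem x hx' N).1, le_trans (hiter_mono N x hx' s hs' hx.2) hN.2⟩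
    have hmemm : ∀ m, τ21^[N + m] x ∈ Set.Icc (0:ℝ) ahat := by
      intro m
      rw [add_comm, Function.iterate_add_apply]
      exact hahat_mem _ hxN m
    refine ⟨hmemm, fun m => ?_⟩
    rw [Finset.prod_range_add, abs_mul]
    have h1 : |∏ k ∈ Finset.range N, τ21' (τ21^[k] x)| ≤ K ^ N :=
      habsprod K hKpos x N (fun k _ => hK _ (hiter_mem x hx' k))
    have h2 : |∏ k ∈ Finset.range m, τ21' (τ21^[N + k] x)| ≤ σ ^ m := by
      have heq : (fun k => τ21' (τ21^[N + k] x)) = fun k => τ21' (τ21^[k] (τ21^[N] x)) := by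
        funext k
        rw [add_comm, Function.iterate_add_apply]
      rw [show ∏ k ∈ Finset.range m, τ21' (τ21^[N + k] x)
            = ∏ k ∈ Finset.range m, τ21' (τ21^[k] (τ21^[N] x)) from by
          exact Finset.prod_congr rfl fun k _ => by rw [add_comm, Function.iterate_add_apply]]
      exact habsprod σ hσ0.le _ m (fun k _ => hσa _ (hahat_mem _ hxN k))
    exact mul_le_mul h1 h2 (abs_nonneg _) (pow_nonneg hKpos N)
  -- term bound on [0,s]
  have htermbd : ∀ s ∈ Set.Ico (0:ℝ) a, ∃ N : ℕ, ∀ n, ∀ x ∈ Set.Icc 0 s,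
      |term n x| ≤ C * K ^ N / σ ^ N * σ ^ n := by
    intro s hs
    obtain ⟨N, hN⟩ := hprodkey s hs
    refine ⟨N, fun n x hx => ?_⟩
    have hx' : x ∈ Set.Icc (0:ℝ) a := ⟨hx.1, le_trans hx.2 hs.2.le⟩
    have hBb : |B (τ21^[n] x)| ≤ C := hC _ (hiter_mem x hx' n)
    have hσNpos : (0:ℝ) < σ ^ N := pow_pos hσ0 N
    rw [hterm]
    simp only []
    rw [abs_mul]
    rcases le_or_gt n N with hn | hn
    · have hp : |∏ k ∈ Finset.range n, τ21' (τ21^[k] x)| ≤ K ^ n :=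
        habsprod K hKpos x n (fun k _ => hK _ (hiter_mem x hx' k))
      have h1 : |B (τ21^[n] x)| * |∏ k ∈ Finset.range n, τ21' (τ21^[k] x)| ≤ C * K ^ n :=
        mul_le_mul hBb hp (abs_nonneg _) hC0
      refine le_trans h1 ?_
      have hNn : N = n + (N - n) := (Nat.add_sub_cancel' hn).symm
      have hKe : K ^ N = K ^ n * K ^ (N - n) := by rw [← pow_add, Nat.add_sub_cancel' hn]
      have hσe : σ ^ N = σ ^ n * σ ^ (N - n) := by rw [← pow_add, Nat.add_sub_cancel' hn]
      rw [div_mul_eq_mul_div, le_div_iff₀ hσNpos]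
      have hpow : σ ^ (N - n) ≤ K ^ (N - n) := pow_le_pow_left₀ hσ0.le hσK _
      calc C * K ^ n * σ ^ N = C * K ^ n * σ ^ n * σ ^ (N - n) := by rw [hσe]; ring
        _ ≤ C * K ^ n * σ ^ n * K ^ (N - n) := by
            apply mul_le_mul_of_nonneg_left hpow
            positivity
        _ = C * K ^ N * σ ^ n := by rw [hKe]; ring
    · obtain ⟨m, rfl⟩ : ∃ m, n = N + m := ⟨n - N, (Nat.add_sub_cancel' hn.le).symm⟩
      have h1 := (hN x hx).2 m
      have : |B (τ21^[N + m] x)| * |∏ k ∈ Finset.range (N + m), τ21' (τ21^[k] x)|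
          ≤ C * (K ^ N * σ ^ m) :=
        mul_le_mul hBb h1 (abs_nonneg _) hC0
      refine le_trans this (le_of_eq ?_)
      rw [pow_add]
      field_simp
  -- summability of the dominating series
  have hsummu : ∀ (D : ℝ), Summable (fun n => D * σ ^ n) :=
    fun D => (summable_geometric_of_lt_one hσ0.le hσ1).mul_left D
  -- summability of the terms
  have hsum : ∀ x ∈ Set.Ico (0:ℝ) a, Summable (fun n => term n x) := by
    intro x hx
    obtain ⟨N, hN⟩ := htermbd x hx
    exact Summable.of_norm_bounded (hsummu (C * K ^ N / σ ^ N))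
      (fun n => hN n x ⟨hx.1, le_rfl⟩)
  set p : ℝ → ℝ := fun x => ∑' n, term n x with hp
  have hhassum : ∀ x ∈ Set.Ico (0:ℝ) a, HasSum (fun n => term n x) (p x) :=
    fun x hx => (hsum x hx).hasSum
  -- bound on [0, ahat]
  have hpbound : ∀ x ∈ Set.Icc (0:ℝ) ahat, |p x| ≤ C * (1 - σ)⁻¹ := by
    intro x hx
    have hbd : ∀ n, ‖term n x‖ ≤ C * σ ^ n := by
      intro n
      rw [hterm]
      simp only [Real.norm_eq_abs]
      rw [abs_mul]
      have h1 : |B (τ21^[n] x)| ≤ C := hC _ (hsub (hahat_mem x hx n))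
      have h2 : |∏ k ∈ Finset.range n, τ21' (τ21^[k] x)| ≤ σ ^ n :=
        habsprod σ hσ0.le x n (fun k _ => hσa _ (hahat_mem x hx k))
      exact mul_le_mul h1 h2 (abs_nonneg _) hC0
    have := tsum_of_norm_bounded ((hasSum_geometric_of_lt_one hσ0.le hσ1).mul_left C) hbd
    simpa [hp, mul_comm] using this
  -- shift identity for terms
  have hshift : ∀ (x : ℝ) (n : ℕ), term n (τ21 x) * τ21' x = term (n + 1) x := by
    intro x n
    simp only [hterm, Finset.prod_range_succ', Function.iterate_succ_apply,
      Function.iterate_zero_apply]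
    ring
  -- functional equation for p
  have hfeq : ∀ x ∈ Set.Ico (0:ℝ) a, p x = p (τ21 x) * τ21' x + B x := by
    intro x hx
    have hx' : x ∈ Set.Icc (0:ℝ) a := ⟨hx.1, hx.2.le⟩
    have hτx : τ21 x ∈ Set.Ico (0:ℝ) a := ⟨(hmem x hx').1, lt_of_le_of_lt (hle x hx') hx.2⟩
    have h2 : HasSum (fun n => term n (τ21 x)) (p (τ21 x)) := hhassum _ hτx
    have h3 : HasSum (fun n => term n (τ21 x) * τ21' x) (p (τ21 x) * τ21' x) :=
      h2.mul_right _
    have h4 : HasSum (fun n => term (n + 1) x) (p (τ21 x) * τ21' x) := by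
      have : (fun n => term n (τ21 x) * τ21' x) = fun n => term (n + 1) x :=
        funext fun n => hshift x n
      rwa [this] at h3
    have h5 := (hasSum_nat_add_iff (f := fun n => term n x) 1).mp h4
    have := (hhassum x hx).unique h5
    rw [this]
    congr 1
    simp [hterm]
  refine ⟨p, ⟨⟨C * (1 - σ)⁻¹, hpbound⟩, hfeq⟩, hhassum, ?_, ?_⟩
  · -- uniform convergence on [0,s]
    intro s hs
    obtain ⟨N, hN⟩ := htermbd s ⟨hs.1.le, hs.2⟩
    exact tendstoUniformlyOn_tsum_nat (hsummu (C * K ^ N / σ ^ N))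
      (fun n x hx => hN n x hx)
  · -- uniqueness
    rintro q ⟨⟨Mq, hMq⟩, hqeq⟩
    have hMq0 : 0 ≤ Mq := le_trans (abs_nonneg _) (hMq 0 ⟨le_rfl, hah0.le⟩)
    intro x hx
    show q x = p x
    have hx' : x ∈ Set.Icc (0:ℝ) a := ⟨hx.1, hx.2.le⟩
    -- iterated difference identity
    have hdn : ∀ n, q x - p x =
        (q (τ21^[n] x) - p (τ21^[n] x)) * ∏ k ∈ Finset.range n, τ21' (τ21^[k] x) := by
      intro n
      induction n with
      | zero => simp
      | succ n ih =>
        have hxn : τ21^[n] x ∈ Set.Ico (0:ℝ) a :=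
          ⟨(hiter_mem x hx' n).1, lt_of_le_of_lt (hiter_le x hx' n) hx.2⟩
        have hstep : q (τ21^[n] x) - p (τ21^[n] x) =
            (q (τ21 (τ21^[n] x)) - p (τ21 (τ21^[n] x))) * τ21' (τ21^[n] x) := by
          rw [hqeq _ hxn, hfeq _ hxn]; ring
        rw [ih, hstep, Finset.prod_range_succ, Function.iterate_succ_apply']
        ring
    obtain ⟨N, hN⟩ := hprodkey x hx
    have hxx : x ∈ Set.Icc (0:ℝ) x := ⟨hx.1, le_rfl⟩
    have hbd : ∀ m : ℕ, |q x - p x| ≤ (Mq + C * (1 - σ)⁻¹) * K ^ N * σ ^ m := by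
      intro m
      rw [hdn (N + m), abs_mul]
      have hmem' := (hN x hxx).1 m
      have h1 : |q (τ21^[N+m] x) - p (τ21^[N+m] x)| ≤ Mq + C * (1 - σ)⁻¹ :=
        le_trans (abs_sub _ _) (add_le_add (hMq _ hmem') (hpbound _ hmem'))
      have h2 := (hN x hxx).2 m
      calc |q (τ21^[N+m] x) - p (τ21^[N+m] x)| * |∏ k ∈ Finset.range (N+m), τ21' (τ21^[k] x)|
          ≤ (Mq + C * (1 - σ)⁻¹) * (K ^ N * σ ^ m) :=
            mul_le_mul h1 h2 (abs_nonneg _) (add_nonneg hMq0 (mul_nonneg hC0 (inv_nonneg.mpr (by linarith))))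
        _ = (Mq + C * (1 - σ)⁻¹) * K ^ N * σ ^ m := by ring
    have htend0 : Filter.Tendsto (fun m : ℕ => (Mq + C * (1 - σ)⁻¹) * K ^ N * σ ^ m)
        Filter.atTop (nhds 0) := by
      have := (tendsto_pow_atTop_nhds_zero_of_lt_one hσ0.le hσ1).const_mul
        ((Mq + C * (1 - σ)⁻¹) * K ^ N)
      simpa using this
    have : |q x - p x| ≤ 0 := ge_of_tendsto' htend0 hbd
    have := abs_nonpos_iff.mp this
    linarith [this]
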